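/- Under the geodesic polar realization, the first Casimir C₁ = κ₂J₀₁² + J₀₂² + J₀₃² + κ₁J₁₂² + κ₁J₁₃² + κ₁κ₂J₂₃² satisfies C₁ = 2κ₂T at every point of D, and the second Casimir C₂ = κ₂J₀₁J₂₃ − J₀₂J₁₃ + J₀₃J₁₂ vanishes identically on D. -/

import Mathlib

namespace Paper
noncomputable section

/-- The κ-dependent cosine Cκ(x) = ∑ (−κ)^l x^{2l}/(2l)!. -/
def Ck (κ x : ℝ) : ℝ := ∑' l : ℕ, (-κ) ^ l * x ^ (2 * l) / (Nat.factorial (2 * l) : ℝ)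

/-- The κ-dependent sine Sκ(x) = ∑ (−κ)^l x^{2l+1}/(2l+1)!. -/
def Sk (κ x : ℝ) : ℝ := ∑' l : ℕ, (-κ) ^ l * x ^ (2 * l + 1) / (Nat.factorial (2 * l + 1) : ℝ)

/-- The κ-dependent tangent Tκ(x) = Sκ(x)/Cκ(x). -/
def Tk (κ x : ℝ) : ℝ := Sk κ x / Ck κ x

/-- Phase space ℝ³ × ℝ³ ≃ ℝ⁶ with canonical coordinates
`(r, θ, φ, p_r, p_θ, p_φ) = (x 0, x 1, x 2, x 3, x 4, x 5)`. -/
abbrev Pt := Fin 6 → ℝ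

/-- Partial derivative in the i-th coordinate direction. -/
def pd (f : Pt → ℝ) (i : Fin 6) (x : Pt) : ℝ := fderiv ℝ f x (Pi.single i 1)

/-- Canonical Poisson bracket {f,g} = ∑_{q} (∂f/∂q ∂g/∂p_q − ∂g/∂q ∂f/∂p_q). -/
def pb (f g : Pt → ℝ) (x : Pt) : ℝ :=
  ∑ i : Fin 3,
    (pd f ⟨i.1, by omega⟩ x * pd g ⟨i.1 + 3, by omega⟩ x
      - pd g ⟨i.1, by omega⟩ x * pd f ⟨i.1 + 3, by omega⟩ x)

/-- Gradient of a function on phase space, as a vector in ℝ⁶. -/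
def grad (f : Pt → ℝ) (x : Pt) : Fin 6 → ℝ := fun i => pd f i x

/-- The open domain D where Sκ₁(r), Cκ₁(r), Sκ₂(θ), Cκ₂(θ), cos φ, sin φ are nonzero. -/
def D (κ₁ κ₂ : ℝ) : Set Pt :=
  {x | Sk κ₁ (x 0) ≠ 0 ∧ Ck κ₁ (x 0) ≠ 0 ∧ Sk κ₂ (x 1) ≠ 0 ∧ Ck κ₂ (x 1) ≠ 0 ∧
       Real.cos (x 2) ≠ 0 ∧ Real.sin (x 2) ≠ 0}

/-- J₀₁ = Cκ₂(θ)p_r − (Sκ₂(θ)/Tκ₁(r))p_θ. -/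
def J01 (κ₁ κ₂ : ℝ) (x : Pt) : ℝ :=
  Ck κ₂ (x 1) * x 3 - (Sk κ₂ (x 1) / Tk κ₁ (x 0)) * x 4

/-- J₀₂. -/
def J02 (κ₁ κ₂ : ℝ) (x : Pt) : ℝ :=
  κ₂ * Sk κ₂ (x 1) * Real.cos (x 2) * x 3
    + (Ck κ₂ (x 1) * Real.cos (x 2) / Tk κ₁ (x 0)) * x 4
    - (Real.sin (x 2) / (Tk κ₁ (x 0) * Sk κ₂ (x 1))) * x 5

/-- J₀₃. -/
def J03 (κ₁ κ₂ : ℝ) (x : Pt) : ℝ :=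
  κ₂ * Sk κ₂ (x 1) * Real.sin (x 2) * x 3
    + (Ck κ₂ (x 1) * Real.sin (x 2) / Tk κ₁ (x 0)) * x 4
    + (Real.cos (x 2) / (Tk κ₁ (x 0) * Sk κ₂ (x 1))) * x 5

/-- J₁₂ = cos φ·p_θ − (sin φ/Tκ₂(θ))p_φ. -/
def J12 (κ₂ : ℝ) (x : Pt) : ℝ :=
  Real.cos (x 2) * x 4 - (Real.sin (x 2) / Tk κ₂ (x 1)) * x 5

/-- J₁₃ = sin φ·p_θ + (cos φ/Tκ₂(θ))p_φ. -/
def J13 (κ₂ : ℝ) (x : Pt) : ℝ :=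
  Real.sin (x 2) * x 4 + (Real.cos (x 2) / Tk κ₂ (x 1)) * x 5

/-- J₂₃ = p_φ. -/
def J23 (x : Pt) : ℝ := x 5

/-- Kinetic energy T. -/
def Tkin (κ₁ κ₂ : ℝ) (x : Pt) : ℝ :=
  (1 / 2) * ((x 3) ^ 2 + (x 4) ^ 2 / (κ₂ * Sk κ₁ (x 0) ^ 2)
    + (x 5) ^ 2 / (κ₂ * Sk κ₁ (x 0) ^ 2 * Sk κ₂ (x 1) ^ 2))

/-- The superintegrable potential U with arbitrary radial function F. -/
def U (κ₁ κ₂ : ℝ) (F : ℝ → ℝ) (β₁ β₂ β₃ : ℝ) (x : Pt) : ℝ :=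
  F (x 0) + (1 / Sk κ₁ (x 0) ^ 2) *
    (β₁ / Ck κ₂ (x 1) ^ 2 + β₂ / (Sk κ₂ (x 1) ^ 2 * Real.cos (x 2) ^ 2)
      + β₃ / (Sk κ₂ (x 1) ^ 2 * Real.sin (x 2) ^ 2))

/-- Integral I₁₂. -/
def I12 (κ₂ β₁ β₂ : ℝ) (x : Pt) : ℝ :=
  (Real.cos (x 2) * x 4 - (Real.sin (x 2) / Tk κ₂ (x 1)) * x 5) ^ 2
    + 2 * β₁ * κ₂ ^ 2 * Tk κ₂ (x 1) ^ 2 * Real.cos (x 2) ^ 2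
    + 2 * β₂ * κ₂ / (Tk κ₂ (x 1) ^ 2 * Real.cos (x 2) ^ 2)

/-- Integral I₁₃. -/
def I13 (κ₂ β₁ β₃ : ℝ) (x : Pt) : ℝ :=
  (Real.sin (x 2) * x 4 + (Real.cos (x 2) / Tk κ₂ (x 1)) * x 5) ^ 2
    + 2 * β₁ * κ₂ ^ 2 * Tk κ₂ (x 1) ^ 2 * Real.sin (x 2) ^ 2
    + 2 * β₃ * κ₂ / (Tk κ₂ (x 1) ^ 2 * Real.sin (x 2) ^ 2)

/-- Integral I₂₃. -/
def I23 (κ₂ β₂ β₃ : ℝ) (x : Pt) : ℝ :=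
  (x 5) ^ 2 + 2 * β₂ * κ₂ * Real.tan (x 2) ^ 2 + 2 * β₃ * κ₂ / Real.tan (x 2) ^ 2

/-- Integral I₁₂₃. -/
def I123 (κ₂ β₁ β₂ β₃ : ℝ) (x : Pt) : ℝ :=
  (x 4) ^ 2 + (x 5) ^ 2 / Sk κ₂ (x 1) ^ 2 + 2 * β₁ * κ₂ / Ck κ₂ (x 1) ^ 2
    + 2 * β₂ * κ₂ / (Sk κ₂ (x 1) ^ 2 * Real.cos (x 2) ^ 2)
    + 2 * β₃ * κ₂ / (Sk κ₂ (x 1) ^ 2 * Real.sin (x 2) ^ 2)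

/-- The Smorodinsky–Winternitz Hamiltonian H^SW. -/
def HSW (κ₁ κ₂ β₀ β₁ β₂ β₃ : ℝ) (x : Pt) : ℝ :=
  Tkin κ₁ κ₂ x + β₀ * Tk κ₁ (x 0) ^ 2 + (1 / Sk κ₁ (x 0) ^ 2) *
    (β₁ / Ck κ₂ (x 1) ^ 2 + β₂ / (Sk κ₂ (x 1) ^ 2 * Real.cos (x 2) ^ 2)
      + β₃ / (Sk κ₂ (x 1) ^ 2 * Real.sin (x 2) ^ 2))

/-- Integral I₀₁ of H^SW. -/
def I01 (κ₁ κ₂ β₀ β₁ : ℝ) (x : Pt) : ℝ :=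
  J01 κ₁ κ₂ x ^ 2 + 2 * β₀ * Tk κ₁ (x 0) ^ 2 * Ck κ₂ (x 1) ^ 2
    + 2 * β₁ / (Tk κ₁ (x 0) ^ 2 * Ck κ₂ (x 1) ^ 2)

/-- Integral I₀₂ of H^SW. -/
def I02 (κ₁ κ₂ β₀ β₂ : ℝ) (x : Pt) : ℝ :=
  J02 κ₁ κ₂ x ^ 2 + 2 * β₀ * κ₂ ^ 2 * Tk κ₁ (x 0) ^ 2 * Sk κ₂ (x 1) ^ 2 * Real.cos (x 2) ^ 2
    + 2 * β₂ * κ₂ / (Tk κ₁ (x 0) ^ 2 * Sk κ₂ (x 1) ^ 2 * Real.cos (x 2) ^ 2)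

/-- Integral I₀₃ of H^SW. -/
def I03 (κ₁ κ₂ β₀ β₃ : ℝ) (x : Pt) : ℝ :=
  J03 κ₁ κ₂ x ^ 2 + 2 * β₀ * κ₂ ^ 2 * Tk κ₁ (x 0) ^ 2 * Sk κ₂ (x 1) ^ 2 * Real.sin (x 2) ^ 2
    + 2 * β₃ * κ₂ / (Tk κ₁ (x 0) ^ 2 * Sk κ₂ (x 1) ^ 2 * Real.sin (x 2) ^ 2)

/-- Generalized Kepler–Coulomb Hamiltonian H^GKC₁ = T + U^GKC₁. -/
def HGKC1 (κ₁ κ₂ k β₂ β₃ : ℝ) (x : Pt) : ℝ :=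
  Tkin κ₁ κ₂ x - k / Tk κ₁ (x 0)
    + (1 / (Sk κ₁ (x 0) ^ 2 * Sk κ₂ (x 1) ^ 2)) *
        (β₂ / Real.cos (x 2) ^ 2 + β₃ / Real.sin (x 2) ^ 2)

/-- Generalized Kepler–Coulomb Hamiltonian H^GKC₂ = T + U^GKC₂. -/
def HGKC2 (κ₁ κ₂ k β₁ β₃ : ℝ) (x : Pt) : ℝ :=
  Tkin κ₁ κ₂ x - k / Tk κ₁ (x 0)
    + (1 / Sk κ₁ (x 0) ^ 2) *
        (β₁ / Ck κ₂ (x 1) ^ 2 + β₃ / (Sk κ₂ (x 1) ^ 2 * Real.sin (x 2) ^ 2))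

/-- Generalized Kepler–Coulomb Hamiltonian H^GKC₃ = T + U^GKC₃. -/
def HGKC3 (κ₁ κ₂ k β₁ β₂ : ℝ) (x : Pt) : ℝ :=
  Tkin κ₁ κ₂ x - k / Tk κ₁ (x 0)
    + (1 / Sk κ₁ (x 0) ^ 2) *
        (β₁ / Ck κ₂ (x 1) ^ 2 + β₂ / (Sk κ₂ (x 1) ^ 2 * Real.cos (x 2) ^ 2))

/-- The function L₁. -/
def L1 (κ₁ κ₂ k β₂ β₃ : ℝ) (x : Pt) : ℝ :=
  -(J02 κ₁ κ₂ x * J12 κ₂ x) - J03 κ₁ κ₂ x * J13 κ₂ x + k * κ₂ * Ck κ₂ (x 1)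
    - (2 * κ₂ * Ck κ₂ (x 1) / (Tk κ₁ (x 0) * Sk κ₂ (x 1) ^ 2)) *
        (β₂ / Real.cos (x 2) ^ 2 + β₃ / Real.sin (x 2) ^ 2)

/-- The function L₂. -/
def L2 (κ₁ κ₂ k β₁ β₃ : ℝ) (x : Pt) : ℝ :=
  J01 κ₁ κ₂ x * J12 κ₂ x - J03 κ₁ κ₂ x * J23 x + k * κ₂ * Sk κ₂ (x 1) * Real.cos (x 2)
    - (2 * κ₂ * Real.cos (x 2) / Tk κ₁ (x 0)) *
        (β₁ * Sk κ₂ (x 1) / Ck κ₂ (x 1) ^ 2 + β₃ / (Sk κ₂ (x 1) * Real.sin (x 2) ^ 2))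

/-- The function L₃. -/
def L3 (κ₁ κ₂ k β₁ β₂ : ℝ) (x : Pt) : ℝ :=
  J01 κ₁ κ₂ x * J13 κ₂ x + J02 κ₁ κ₂ x * J23 x + k * κ₂ * Sk κ₂ (x 1) * Real.sin (x 2)
    - (2 * κ₂ * Real.sin (x 2) / Tk κ₁ (x 0)) *
        (β₁ * Sk κ₂ (x 1) / Ck κ₂ (x 1) ^ 2 + β₂ / (Sk κ₂ (x 1) * Real.cos (x 2) ^ 2))


private lemma pyth_aux (κ x : ℝ) : Ck κ x ^ 2 + κ * Sk κ x ^ 2 = 1 := by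
  rcases lt_trichotomy κ 0 with h | h | h
  · set s := Real.sqrt (-κ) with hs
    have hs2 : s ^ 2 = -κ := Real.sq_sqrt (by linarith)
    have hC : Ck κ x = Real.cosh (s * x) := by
      rw [Ck, Real.cosh_eq_tsum]
      congr 1; funext l
      have : (s * x) ^ (2 * l) = (-κ) ^ l * x ^ (2 * l) := by
        rw [mul_pow, pow_mul, hs2]
      rw [this]
    have hS : s * Sk κ x = Real.sinh (s * x) := by
      rw [Sk, ← tsum_mul_left, Real.sinh_eq_tsum]
      congr 1; funext l
      have : (s * x) ^ (2 * l + 1) = (-κ) ^ l * s * x ^ (2 * l + 1) := by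
        rw [mul_pow, pow_succ, pow_mul, hs2]
      rw [this]; ring
    have h2 : κ * Sk κ x ^ 2 = -(s * Sk κ x) ^ 2 := by
      rw [mul_pow, hs2]; ring
    rw [hC, h2, hS]
    have := Real.cosh_sq_sub_sinh_sq (s * x)
    linarith
  · subst h
    have hC : Ck 0 x = 1 := by
      rw [Ck, tsum_eq_single 0 (by intro l hl; simp [zero_pow hl])]
      simp
    rw [hC]; ring
  · set s := Real.sqrt κ with hs
    have hs2 : s ^ 2 = κ := Real.sq_sqrt h.le
    have hC : Ck κ x = Real.cos (s * x) := by
      rw [Ck, Real.cos_eq_tsum]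
      congr 1; funext l
      have : (s * x) ^ (2 * l) = κ ^ l * x ^ (2 * l) := by
        rw [mul_pow, pow_mul, hs2]
      rw [this, neg_pow, neg_pow]; ring
    have hS : s * Sk κ x = Real.sin (s * x) := by
      rw [Sk, ← tsum_mul_left, Real.sin_eq_tsum]
      congr 1; funext l
      have : (s * x) ^ (2 * l + 1) = κ ^ l * s * x ^ (2 * l + 1) := by
        rw [mul_pow, pow_succ, pow_mul, hs2]
      rw [this, neg_pow]; ring
    have h2 : κ * Sk κ x ^ 2 = (s * Sk κ x) ^ 2 := by rw [mul_pow, hs2]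
    rw [hC, h2, hS]
    exact Real.cos_sq_add_sin_sq _

private lemma casimir1_aux (κ₁ κ₂ : ℝ) (hκ₂ : κ₂ ≠ 0) (s1 c1 s2 c2 sf cf p3 p4 p5 : ℝ)
    (hs1 : s1 ≠ 0) (hc1 : c1 ≠ 0) (hs2 : s2 ≠ 0) (hc2 : c2 ≠ 0) (hcf : cf ≠ 0) (hsf : sf ≠ 0)
    (h1 : c1 ^ 2 + κ₁ * s1 ^ 2 = 1) (h2 : c2 ^ 2 + κ₂ * s2 ^ 2 = 1) (h3 : sf ^ 2 + cf ^ 2 = 1) :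
    κ₂ * (c2 * p3 - s2 / (s1 / c1) * p4) ^ 2
      + (κ₂ * s2 * cf * p3 + c2 * cf / (s1 / c1) * p4 - sf / ((s1 / c1) * s2) * p5) ^ 2
      + (κ₂ * s2 * sf * p3 + c2 * sf / (s1 / c1) * p4 + cf / ((s1 / c1) * s2) * p5) ^ 2
      + κ₁ * (cf * p4 - sf / (s2 / c2) * p5) ^ 2
      + κ₁ * (sf * p4 + cf / (s2 / c2) * p5) ^ 2
      + κ₁ * κ₂ * p5 ^ 2
    = 2 * κ₂ * ((1 / 2) * (p3 ^ 2 + p4 ^ 2 / (κ₂ * s1 ^ 2) + p5 ^ 2 / (κ₂ * s1 ^ 2 * s2 ^ 2))) := by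
  field_simp
  linear_combination
    (s2^2*p4^2 + p5^2) * h1
    + (κ₂*s2^2*s1^2*p3^2 + s2^2*c1^2*p4^2 + s1^2*κ₁*p5^2) * h2
    + (s2^2*(κ₂*p3*s2*s1 + c2*c1*p4)^2 + c1^2*p5^2 + s1^2*κ₁*(s2^2*p4^2 + c2^2*p5^2)) * h3

private lemma casimir2_aux (κ₁ κ₂ : ℝ) (hκ₂ : κ₂ ≠ 0) (s1 c1 s2 c2 sf cf p3 p4 p5 : ℝ)
    (hs1 : s1 ≠ 0) (hc1 : c1 ≠ 0) (hs2 : s2 ≠ 0) (hc2 : c2 ≠ 0) (hcf : cf ≠ 0) (hsf : sf ≠ 0)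
    (h1 : c1 ^ 2 + κ₁ * s1 ^ 2 = 1) (h2 : c2 ^ 2 + κ₂ * s2 ^ 2 = 1) (h3 : sf ^ 2 + cf ^ 2 = 1) :
    κ₂ * (c2 * p3 - s2 / (s1 / c1) * p4) * p5
      - (κ₂ * s2 * cf * p3 + c2 * cf / (s1 / c1) * p4 - sf / ((s1 / c1) * s2) * p5)
          * (sf * p4 + cf / (s2 / c2) * p5)
      + (κ₂ * s2 * sf * p3 + c2 * sf / (s1 / c1) * p4 + cf / ((s1 / c1) * s2) * p5)
          * (cf * p4 - sf / (s2 / c2) * p5) = 0 := by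
  field_simp
  linear_combination
    (-(c1*s2*p4*p5)) * h2
    + (c1*s2*p4*p5 - s2*(κ₂*p3*s2*s1 + c2*c1*p4)*c2*p5) * h3

/-- the first Casimir equals 2κ₂T and the second Casimir vanishes
on D, under the geodesic polar realization. -/
theorem casimirs_of_geodesic_polar_realization (κ₁ κ₂ : ℝ) (hκ₂ : κ₂ ≠ 0) :
    ∀ x ∈ D κ₁ κ₂,
      κ₂ * J01 κ₁ κ₂ x ^ 2 + J02 κ₁ κ₂ x ^ 2 + J03 κ₁ κ₂ x ^ 2
          + κ₁ * J12 κ₂ x ^ 2 + κ₁ * J13 κ₂ x ^ 2 + κ₁ * κ₂ * J23 x ^ 2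
        = 2 * κ₂ * Tkin κ₁ κ₂ x ∧
      κ₂ * J01 κ₁ κ₂ x * J23 x - J02 κ₁ κ₂ x * J13 κ₂ x + J03 κ₁ κ₂ x * J12 κ₂ x = 0 := by
  intro x hx
  obtain ⟨hs1, hc1, hs2, hc2, hcf, hsf⟩ := hx
  have h1 := pyth_aux κ₁ (x 0)
  have h2 := pyth_aux κ₂ (x 1)
  have h3 := Real.sin_sq_add_cos_sq (x 2)
  constructor
  · simp only [J01, J02, J03, J12, J13, J23, Tkin, Tk]
    exact casimir1_aux κ₁ κ₂ hκ₂ _ _ _ _ _ _ _ _ _ hs1 hc1 hs2 hc2 hcf hsf h1 h2 h3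
  · simp only [J01, J02, J03, J12, J13, J23, Tk]
    exact casimir2_aux κ₁ κ₂ hκ₂ _ _ _ _ _ _ _ _ _ hs1 hc1 hs2 hc2 hcf hsf h1 h2 h3


end
end Paper
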